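/- Let V = Aug(ℂ^n) be the augmentation submodule of the natural ℂ[T_n]-module ℂ^n. For each 1 ≤ r ≤ n there is a short exact sequence of ℂ[T_n]-modules 0 → Λ^r(V) → Λ^r(ℂ^n) → Λ^{r-1}(V) → 0. -/

import Mathlib

open Finset in
/-- The natural representation of the full transformation monoid `Function.End (Fin n)`
on `ℂ^n`, determined by `f · v_i = v_{f i}` on the standard basis. -/
noncomputable def natRep (n : ℕ) :
    Representation ℂ (Function.End (Fin n)) (Fin n → ℂ) where
  toFun f :=
    { toFun := fun x j => ∑ i, if f i = j then x i else 0
      map_add' := by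
        intro x y
        funext j
        simp only [Pi.add_apply]
        rw [← Finset.sum_add_distrib]
        congr 1; funext i; split <;> simp
      map_smul' := by
        intro c x
        funext j
        simp [Finset.mul_sum, apply_ite (fun t => c * t)] }
  map_one' := by
    refine LinearMap.ext fun x => funext fun j => ?_
    show (∑ i, if (1 : Function.End (Fin n)) i = j then x i else 0) = x j
    have h : ∀ i : Fin n, (1 : Function.End (Fin n)) i = i := fun _ => rfl
    simp only [h]
    rw [Finset.sum_ite_eq' Finset.univ j x]
    simp
  map_mul' := by
    intro f g
    refine LinearMap.ext fun x => funext fun j => ?_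
    show (∑ i, if f (g i) = j then x i else 0)
        = ∑ k, if f k = j then ∑ i, if g i = k then x i else 0 else 0
    have key : ∀ k, (if f k = j then ∑ i, if g i = k then x i else 0 else 0)
        = ∑ i, if g i = k then (if f k = j then x i else 0) else 0 := by
      intro k; split
      · rfl
      · simp
    rw [Finset.sum_congr rfl (fun k _ => key k), Finset.sum_comm]
    refine Finset.sum_congr rfl fun i _ => ?_
    rw [Finset.sum_ite_eq Finset.univ (g i) (fun k => if f k = j then x i else 0)]
    simp

lemma sum_natRep (n : ℕ) (f : Function.End (Fin n)) (x : Fin n → ℂ) :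
    ∑ j, natRep n f x j = ∑ i, x i := by
  show ∑ j, ∑ i, (if f i = j then x i else 0) = _
  rw [Finset.sum_comm]
  simp [Finset.sum_ite_eq' Finset.univ]

/-- The augmentation submodule `Aug(ℂ^n)` of the natural module: vectors whose
coordinates sum to zero. -/
noncomputable def Aug (n : ℕ) : Submodule ℂ (Fin n → ℂ) where
  carrier := {x | ∑ i, x i = 0}
  add_mem' := by intro a b ha hb; simp_all [Finset.sum_add_distrib]
  zero_mem' := by simp
  smul_mem' := by intro c a ha; simp_all [← Finset.mul_sum]

lemma natRep_mem_aug (n : ℕ) (f : Function.End (Fin n)) {x : Fin n → ℂ}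
    (hx : x ∈ Aug n) : natRep n f x ∈ Aug n := by
  have : ∑ j, natRep n f x j = 0 := by rw [sum_natRep]; exact hx
  exact this

/-- The representation of the full transformation monoid on the augmentation submodule. -/
noncomputable def augRep (n : ℕ) : Representation ℂ (Function.End (Fin n)) (Aug n) where
  toFun f := (natRep n f).restrict (p := Aug n) (q := Aug n) (fun _ hx => natRep_mem_aug n f hx)
  map_one' := by
    refine LinearMap.ext fun x => Subtype.ext ?_
    simp [LinearMap.restrict_apply]
  map_mul' := by
    intro f g
    refine LinearMap.ext fun x => Subtype.ext ?_
    simp [LinearMap.restrict_apply]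

lemma extAlg_map_mem {R M N : Type} [CommRing R] [AddCommGroup M] [Module R M]
    [AddCommGroup N] [Module R N] (r : ℕ) (f : M →ₗ[R] N) {x : ExteriorAlgebra R M}
    (hx : x ∈ ⋀[R]^r M) : ExteriorAlgebra.map f x ∈ ⋀[R]^r N := by
  rw [← ExteriorAlgebra.ιMulti_span_fixedDegree] at hx ⊢
  induction hx using Submodule.span_induction with
  | mem y hy =>
      obtain ⟨v, rfl⟩ := hy
      rw [ExteriorAlgebra.map_apply_ιMulti]
      exact Submodule.subset_span ⟨f ∘ v, rfl⟩
  | zero => simp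
  | add y z _ _ hy hz => rw [map_add]; exact Submodule.add_mem _ hy hz
  | smul c y _ hy => rw [map_smul]; exact Submodule.smul_mem _ c hy

/-- The linear map between `r`-th exterior powers induced by a linear map. -/
noncomputable def extMap {R M N : Type} [CommRing R] [AddCommGroup M] [Module R M]
    [AddCommGroup N] [Module R N] (r : ℕ) (f : M →ₗ[R] N) :
    ⋀[R]^r M →ₗ[R] ⋀[R]^r N :=
  (ExteriorAlgebra.map f).toLinearMap.restrict (p := ⋀[R]^r M) (q := ⋀[R]^r N)
    (fun _ hx => extAlg_map_mem r f hx)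

/-- The representation of the full transformation monoid on the `r`-th exterior power
of the natural module, by the diagonal action on wedge products. -/
noncomputable def extRep (n r : ℕ) :
    Representation ℂ (Function.End (Fin n)) (⋀[ℂ]^r (Fin n → ℂ)) where
  toFun f := extMap r (natRep n f)
  map_one' := by
    refine LinearMap.ext fun x => Subtype.ext ?_
    simp [extMap, LinearMap.restrict_apply, map_one, Module.End.one_eq_id,
      ExteriorAlgebra.map_id]
  map_mul' := by
    intro f g
    refine LinearMap.ext fun x => Subtype.ext ?_
    simp only [extMap, LinearMap.restrict_apply, map_mul, Module.End.mul_eq_comp,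
      ← ExteriorAlgebra.map_comp_map]
    rfl

set_option synthInstance.maxHeartbeats 1000000 in
/-- The representation of the full transformation monoid on the `r`-th exterior power
of the augmentation submodule. -/
noncomputable def extAugRep (n r : ℕ) :
    Representation ℂ (Function.End (Fin n)) (⋀[ℂ]^r ↥(Aug n)) where
  toFun f := extMap r (augRep n f)
  map_one' := by
    refine LinearMap.ext fun x => Subtype.ext ?_
    simp [extMap, LinearMap.restrict_apply, map_one, Module.End.one_eq_id,
      ExteriorAlgebra.map_id]
  map_mul' := by
    intro f g
    refine LinearMap.ext fun x => Subtype.ext ?_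
    simp only [extMap, LinearMap.restrict_apply, map_mul, Module.End.mul_eq_comp,
      ← ExteriorAlgebra.map_comp_map]
    rfl

/-- The idempotent `e_m ∈ T_n` fixing the first `m` points and sending all other
points to the first point. -/
def eIdem (n m : ℕ) : Function.End (Fin n) :=
  fun i => if h : (i : ℕ) < m then i else ⟨0, i.pos⟩

/-- The embedding of the symmetric group `S_r` into `T_n` as the maximal subgroup
at the idempotent `eIdem n r` (elements `g` with `e g e = g` invertible in `e T_n e`). -/
def permEmbed (n r : ℕ) (hr : 1 ≤ r) (hrn : r ≤ n) (σ : Equiv.Perm (Fin r)) :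
    Function.End (Fin n) :=
  fun i => Fin.castLE hrn (σ (if hi : (i : ℕ) < r then ⟨i, hi⟩ else ⟨0, hr⟩))

/-- The idempotent `η = (1/r!) ∑_{g ∈ G} sgn(g|_{[r]}) g` of the monoid algebra,
where `G ≅ S_r` is the maximal subgroup at `eIdem n r`. -/
noncomputable def eta (n r : ℕ) (hr : 1 ≤ r) (hrn : r ≤ n) :
    MonoidAlgebra ℂ (Function.End (Fin n)) :=
  (r.factorial : ℂ)⁻¹ • ∑ σ : Equiv.Perm (Fin r),
    MonoidAlgebra.single (permEmbed n r hr hrn σ) ((Equiv.Perm.sign σ : ℤ) : ℂ)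

/-- A permutation of `Fin m`, viewed as an element of the transformation monoid. -/
def permToEnd (m : ℕ) : Equiv.Perm (Fin m) →* Function.End (Fin m) where
  toFun σ := ⇑σ
  map_one' := rfl
  map_mul' := fun _ _ => rfl

/-- The wedge product of a family of `r` vectors, as an element of the `r`-th
exterior power. -/
noncomputable def wedge {M : Type} [AddCommGroup M] [Module ℂ M] (r : ℕ) (v : Fin r → M) :
    ⋀[ℂ]^r M :=
  ⟨ExteriorAlgebra.ιMulti ℂ r v, ExteriorAlgebra.ιMulti_range ℂ r ⟨v, rfl⟩⟩

/-- The basis `w_1, …, w_n` of `ℂ^n`: `w_i = v_i - v_n` for `i < n` and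
`w_n = v_1 + ⋯ + v_n`. -/
noncomputable def wBasis (n : ℕ) : Fin n → (Fin n → ℂ) :=
  fun i => if h : (i : ℕ) < n - 1
    then Pi.single i 1 - Pi.single (⟨n - 1, by omega⟩ : Fin n) 1
    else ∑ j, Pi.single j 1

lemma wBasis_mem_aug (n : ℕ) (i : Fin n) (h : (i : ℕ) < n - 1) : wBasis n i ∈ Aug n := by
  show ∑ j, wBasis n i j = 0
  simp [wBasis, h, Finset.sum_sub_distrib, Finset.sum_pi_single]

/-- The vectors `w_i = v_i - v_n` (for `i < n`) as elements of the augmentation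
submodule; junk value `0` otherwise. -/
noncomputable def wAug (n : ℕ) : Fin n → ↥(Aug n) :=
  fun i => if h : (i : ℕ) < n - 1 then ⟨wBasis n i, wBasis_mem_aug n i h⟩ else 0

/-- The trivial representation of the full transformation monoid on `ℂ`. -/
noncomputable def trivRep (n : ℕ) : Representation ℂ (Function.End (Fin n)) ℂ := 1

/-- `projDimLE R M k` : the `R`-module `M` admits a projective resolution of length
at most `k`, i.e. has projective dimension at most `k`. -/
def projDimLE (R : Type) [Ring R] (M : Type) [AddCommMonoid M] [Module R M] (k : ℕ) : Prop :=
  ∃ (P : ℕ → ModuleCat.{0} R) (d : (i : ℕ) → (P (i + 1) →ₗ[R] P i)) (π : P 0 →ₗ[R] M),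
    (∀ i, Module.Projective R (P i)) ∧
    Function.Surjective π ∧
    LinearMap.ker π = LinearMap.range (d 0) ∧
    (∀ i, LinearMap.ker (d i) = LinearMap.range (d (i + 1))) ∧
    (∀ i, k < i → Subsingleton (P i))

/-- The sign character of `S_n`, extended by zero to all of `T_n`. -/
noncomputable def sgnExt (n : ℕ) (f : Function.End (Fin n)) : ℂ :=
  haveI : Decidable (Function.Bijective f) :=
    Fintype.decidableBijectiveFintype (α := Fin n) (β := Fin n) f
  if h : Function.Bijective f then ((Equiv.Perm.sign (Equiv.ofBijective f h) : ℤ) : ℂ) else 0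


open CliffordAlgebra ExteriorAlgebra in
lemma contract_naturality {R M N : Type} [CommRing R] [AddCommGroup M] [Module R M]
    [AddCommGroup N] [Module R N] (F : M →ₗ[R] N) (s : Module.Dual R N)
    (x : ExteriorAlgebra R M) :
    contractLeft s (ExteriorAlgebra.map F x)
      = ExteriorAlgebra.map F (contractLeft (s.comp F) x) := by
  induction x using CliffordAlgebra.left_induction with
  | algebraMap r => simp [AlgHom.commutes, contractLeft_algebraMap]
  | add x y hx hy => simp [map_add, hx, hy]
  | ι_mul x m hx =>
      rw [map_mul, ExteriorAlgebra.map_apply_ι, contractLeft_ι_mul, contractLeft_ι_mul,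
        map_sub, map_smul, map_mul, ExteriorAlgebra.map_apply_ι, hx, LinearMap.comp_apply]

open CliffordAlgebra ExteriorAlgebra in
lemma contract_homotopy {R M : Type} [CommRing R] [AddCommGroup M] [Module R M]
    (u : M) (s : Module.Dual R M) (x : ExteriorAlgebra R M) :
    ExteriorAlgebra.map (LinearMap.id - s.smulRight u) x
      = x - ExteriorAlgebra.ι R u * contractLeft s x := by
  induction x using CliffordAlgebra.left_induction with
  | algebraMap r => simp [AlgHom.commutes, contractLeft_algebraMap]
  | add x y hx hy => rw [map_add, hx, hy, map_add, mul_add]; abel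
  | ι_mul x m hx =>
      have h1 : ExteriorAlgebra.map (LinearMap.id - s.smulRight u) (ExteriorAlgebra.ι R m)
          = ExteriorAlgebra.ι R m - s m • ExteriorAlgebra.ι R u := by
        rw [ExteriorAlgebra.map_apply_ι, LinearMap.sub_apply, LinearMap.id_apply,
          LinearMap.smulRight_apply, map_sub, map_smul]
      have hmu : ExteriorAlgebra.ι R m * (ExteriorAlgebra.ι R u * contractLeft s x)
          = -(ExteriorAlgebra.ι R u * (ExteriorAlgebra.ι R m * contractLeft s x)) := by
        rw [← mul_assoc, ← mul_assoc, ← neg_mul]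
        exact congrArg (· * contractLeft s x)
          (eq_neg_of_add_eq_zero_left (ExteriorAlgebra.ι_add_mul_swap m u))
      have huu : ExteriorAlgebra.ι R u * (ExteriorAlgebra.ι R u * contractLeft s x) = 0 := by
        rw [← mul_assoc, ExteriorAlgebra.ι_sq_zero, zero_mul]
      rw [map_mul, h1, hx, contractLeft_ι_mul, sub_mul, mul_sub, mul_sub, mul_sub,
        hmu, smul_mul_assoc, smul_mul_assoc, huu, smul_zero, mul_smul_comm]
      abel

open CliffordAlgebra ExteriorAlgebra in
lemma ι_mul_mem {R M : Type} [CommRing R] [AddCommGroup M] [Module R M]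
    {k : ℕ} (u : M) {x : ExteriorAlgebra R M} (hx : x ∈ ⋀[R]^k M) :
    ExteriorAlgebra.ι R u * x ∈ ⋀[R]^(k+1) M := by
  rw [exteriorPower, pow_succ']
  exact Submodule.mul_mem_mul (LinearMap.mem_range_self _ u) hx

open CliffordAlgebra ExteriorAlgebra in
lemma contract_mem {R M : Type} [CommRing R] [AddCommGroup M] [Module R M]
    (s : Module.Dual R M) :
    ∀ (k : ℕ) {x : ExteriorAlgebra R M}, x ∈ ⋀[R]^(k+1) M →
      contractLeft s x ∈ ⋀[R]^k M := by
  intro k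
  induction k with
  | zero =>
      intro x hx
      rw [← ExteriorAlgebra.ιMulti_span_fixedDegree] at hx
      induction hx using Submodule.span_induction with
      | mem y hy =>
          obtain ⟨v, rfl⟩ := hy
          rw [ExteriorAlgebra.ιMulti_succ_apply, contractLeft_ι_mul]
          refine Submodule.sub_mem _
            (Submodule.smul_mem _ _ (ExteriorAlgebra.ιMulti_range R _ ⟨_, rfl⟩)) ?_
          rw [ExteriorAlgebra.ιMulti_zero_apply, contractLeft_one, mul_zero]
          exact Submodule.zero_mem _
      | zero => simp
      | add y z _ _ hy hz => rw [map_add]; exact Submodule.add_mem _ hy hz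
      | smul c y _ hy => rw [map_smul]; exact Submodule.smul_mem _ c hy
  | succ j ih =>
      intro x hx
      rw [← ExteriorAlgebra.ιMulti_span_fixedDegree] at hx
      induction hx using Submodule.span_induction with
      | mem y hy =>
          obtain ⟨v, rfl⟩ := hy
          rw [ExteriorAlgebra.ιMulti_succ_apply, contractLeft_ι_mul]
          refine Submodule.sub_mem _
            (Submodule.smul_mem _ _ (ExteriorAlgebra.ιMulti_range R _ ⟨_, rfl⟩)) ?_
          exact ι_mul_mem _ (ih (ExteriorAlgebra.ιMulti_range R _ ⟨_, rfl⟩))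
      | zero => simp
      | add y z _ _ hy hz => rw [map_add]; exact Submodule.add_mem _ hy hz
      | smul c y _ hy => rw [map_smul]; exact Submodule.smul_mem _ c hy

set_option synthInstance.maxHeartbeats 1000000 in
set_option maxHeartbeats 4000000 in
/-- For `1 ≤ r ≤ n` there is a short exact sequence of `ℂ[T_n]`-modules
`0 → Λ^r(V) → Λ^r(ℂ^n) → Λ^{r-1}(V) → 0`, where `V = Aug(ℂ^n)`: the inclusion
`Λ^r(V) → Λ^r(ℂ^n)` induced by `V ⊆ ℂ^n` is injective and `T_n`-equivariant, and
there is a surjective `T_n`-equivariant linear map `Λ^r(ℂ^n) → Λ^{r-1}(V)` whose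
kernel is the image of the inclusion. -/
theorem exteriorPower_short_exact_sequence (n r : ℕ) (hr : 1 ≤ r) (hrn : r ≤ n) :
    ∃ π : ↥(⋀[ℂ]^r (Fin n → ℂ)) →ₗ[ℂ] ↥(⋀[ℂ]^(r-1) ↥(Aug n)),
      Function.Injective (extMap r (Aug n).subtype) ∧
      (∀ f : Function.End (Fin n),
        (extMap r (Aug n).subtype).comp (extAugRep n r f)
          = (extRep n r f).comp (extMap r (Aug n).subtype)) ∧
      Function.Surjective π ∧
      LinearMap.range (extMap r (Aug n).subtype) = LinearMap.ker π ∧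
      (∀ f : Function.End (Fin n),
        π.comp (extRep n r f) = (extAugRep n (r-1) f).comp π) := by
  classical
  obtain ⟨m, rfl⟩ : ∃ m, r = m + 1 := ⟨r - 1, (Nat.succ_pred_eq_of_pos hr).symm⟩
  show ∃ π : ↥(⋀[ℂ]^(m+1) (Fin n → ℂ)) →ₗ[ℂ] ↥(⋀[ℂ]^m ↥(Aug n)),
      Function.Injective (extMap (m+1) (Aug n).subtype) ∧
      (∀ f : Function.End (Fin n),
        (extMap (m+1) (Aug n).subtype).comp (extAugRep n (m+1) f)
          = (extRep n (m+1) f).comp (extMap (m+1) (Aug n).subtype)) ∧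
      Function.Surjective π ∧
      LinearMap.range (extMap (m+1) (Aug n).subtype) = LinearMap.ker π ∧
      (∀ f : Function.End (Fin n),
        π.comp (extRep n (m+1) f) = (extAugRep n m f).comp π)
  have hn : 0 < n := lt_of_lt_of_le hr hrn
  -- the sum functional
  set s : Module.Dual ℂ (Fin n → ℂ) := ∑ i, LinearMap.proj i with hs_def
  have hs : ∀ x : Fin n → ℂ, s x = ∑ i, x i := by
    intro x; simp [hs_def, LinearMap.sum_apply, LinearMap.proj_apply]
  set u : Fin n → ℂ := Pi.single (⟨0, hn⟩ : Fin n) 1 with hu_def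
  have hsu : s u = 1 := by simp [hs, hu_def, Finset.sum_pi_single']
  set p'' : (Fin n → ℂ) →ₗ[ℂ] (Fin n → ℂ) := LinearMap.id - s.smulRight u with hp''_def
  have hp''_apply : ∀ x, p'' x = x - s x • u := fun x => rfl
  have hp''_mem : ∀ x, p'' x ∈ Aug n := by
    intro x
    show ∑ i, (x - s x • u) i = 0
    have : ∑ i, (x - s x • u) i = (∑ i, x i) - s x * ∑ i, u i := by
      simp [Finset.sum_sub_distrib, Finset.mul_sum]
    rw [this, ← hs x, ← hs u, hsu, mul_one, sub_self]
  set p' : (Fin n → ℂ) →ₗ[ℂ] ↥(Aug n) := p''.codRestrict (Aug n) hp''_mem with hp'_def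
  have hsub_p' : (Aug n).subtype.comp p' = p'' := rfl
  have hs_aug : ∀ x : ↥(Aug n), s x.val = 0 := fun x => by rw [hs]; exact x.2
  have hp'_sub : p'.comp (Aug n).subtype = LinearMap.id := by
    refine LinearMap.ext fun x => Subtype.ext ?_
    show p'' x.val = x.val
    rw [hp''_apply, hs_aug, zero_smul, sub_zero]
  -- injectivity of the inclusions, in every degree
  have hinj : ∀ k : ℕ, Function.Injective (extMap k (Aug n).subtype) := by
    intro k a b h
    have key : ∀ c : ↥(⋀[ℂ]^k ↥(Aug n)), extMap k p' (extMap k (Aug n).subtype c) = c := by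
      intro c
      refine Subtype.ext ?_
      show ExteriorAlgebra.map p' (ExteriorAlgebra.map (Aug n).subtype c.val) = c.val
      rw [← AlgHom.comp_apply, ExteriorAlgebra.map_comp_map, hp'_sub, ExteriorAlgebra.map_id,
        AlgHom.id_apply]
    rw [← key a, ← key b, h]
  -- the contraction map D : Λ^{m+1} → Λ^m
  set D : ↥(⋀[ℂ]^(m+1) (Fin n → ℂ)) →ₗ[ℂ] ↥(⋀[ℂ]^m (Fin n → ℂ)) :=
    (CliffordAlgebra.contractLeft s).restrict
      (p := ⋀[ℂ]^(m+1) (Fin n → ℂ)) (q := ⋀[ℂ]^m (Fin n → ℂ))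
      (fun x hx => contract_mem s m hx) with hD_def
  have hD_val : ∀ x, (D x).val = CliffordAlgebra.contractLeft s x.val := fun _ => rfl
  set π : ↥(⋀[ℂ]^(m+1) (Fin n → ℂ)) →ₗ[ℂ] ↥(⋀[ℂ]^m ↥(Aug n)) := (extMap m p').comp D
    with hπ_def
  -- contraction kills the image of Λ(Aug n)
  have hc_sub : ∀ y : ExteriorAlgebra ℂ ↥(Aug n),
      CliffordAlgebra.contractLeft s (ExteriorAlgebra.map (Aug n).subtype y) = 0 := by
    intro y
    rw [contract_naturality]
    have h0 : s.comp (Aug n).subtype = 0 := LinearMap.ext fun x => hs_aug x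
    rw [h0, map_zero, LinearMap.zero_apply, map_zero]
  -- key identity: the inclusion of π x is the contraction of x
  have hkey : ∀ x : ↥(⋀[ℂ]^(m+1) (Fin n → ℂ)),
      (extMap m (Aug n).subtype (π x)).val = CliffordAlgebra.contractLeft s x.val := by
    intro x
    show ExteriorAlgebra.map (Aug n).subtype (ExteriorAlgebra.map p' (D x).val)
      = CliffordAlgebra.contractLeft s x.val
    rw [← AlgHom.comp_apply, ExteriorAlgebra.map_comp_map, hsub_p', hD_val, hp''_def,
      contract_homotopy u s, CliffordAlgebra.contractLeft_contractLeft, mul_zero, sub_zero]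
  -- equivariance of the inclusions
  have hcomp : ∀ (k : ℕ) (f : Function.End (Fin n)),
      (extMap k (Aug n).subtype).comp (extMap k (augRep n f))
        = (extMap k (natRep n f)).comp (extMap k (Aug n).subtype) := by
    intro k f
    refine LinearMap.ext fun x => Subtype.ext ?_
    show ExteriorAlgebra.map (Aug n).subtype (ExteriorAlgebra.map (augRep n f) x.val)
      = ExteriorAlgebra.map (natRep n f) (ExteriorAlgebra.map (Aug n).subtype x.val)
    rw [← AlgHom.comp_apply, ← AlgHom.comp_apply, ExteriorAlgebra.map_comp_map,
      ExteriorAlgebra.map_comp_map]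
    have : LinearMap.comp (Aug n).subtype (augRep n f)
        = LinearMap.comp (natRep n f : (Fin n → ℂ) →ₗ[ℂ] (Fin n → ℂ)) (Aug n).subtype :=
      LinearMap.ext fun v => rfl
    rw [this]
  refine ⟨π, ?_, ?_, ?_, ?_, ?_⟩
  · exact hinj (m + 1)
  · exact fun f => hcomp (m + 1) f
  · -- surjectivity of π
    intro ω
    have hymem := (extMap m (Aug n).subtype ω).2
    refine ⟨⟨ExteriorAlgebra.ι ℂ u * (extMap m (Aug n).subtype ω).val,
      ι_mul_mem u hymem⟩, hinj m (Subtype.ext ?_)⟩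
    rw [hkey]
    show CliffordAlgebra.contractLeft s
        (ExteriorAlgebra.ι ℂ u * (extMap m (Aug n).subtype ω).val) = _
    rw [CliffordAlgebra.contractLeft_ι_mul]
    have h0 : CliffordAlgebra.contractLeft s (extMap m (Aug n).subtype ω).val = 0 :=
      hc_sub ω.val
    rw [h0, mul_zero, sub_zero, hsu, one_smul]
  · -- exactness
    refine le_antisymm ?_ ?_
    · rintro x hx
      obtain ⟨z, rfl⟩ := hx
      have h1 : extMap m (Aug n).subtype (π (extMap (m+1) (Aug n).subtype z)) = 0 := by
        refine Subtype.ext ?_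
        rw [hkey]
        exact hc_sub z.val
      have h2 : extMap m (Aug n).subtype (0 : ↥(⋀[ℂ]^m ↥(Aug n))) = 0 := map_zero _
      exact LinearMap.mem_ker.mpr (hinj m (h1.trans h2.symm))
    · intro x hx
      have hx0 : CliffordAlgebra.contractLeft s x.val = 0 := by
        rw [← hkey x, LinearMap.mem_ker.mp hx, map_zero]
        rfl
      have hval : ExteriorAlgebra.map (Aug n).subtype
          (ExteriorAlgebra.map p' x.val) = x.val := by
        rw [← AlgHom.comp_apply, ExteriorAlgebra.map_comp_map, hsub_p', hp''_def,
          contract_homotopy u s, hx0, mul_zero, sub_zero]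
      exact ⟨⟨ExteriorAlgebra.map p' x.val, extAlg_map_mem (m+1) p' x.2⟩, Subtype.ext hval⟩
  · -- equivariance of π
    intro f
    refine LinearMap.ext fun x => hinj m (Subtype.ext ?_)
    have hrhs : (extMap m (Aug n).subtype ((extAugRep n m f) (π x))).val
        = ExteriorAlgebra.map (natRep n f) ((extMap m (Aug n).subtype (π x)).val) := by
      have := congrArg Subtype.val (LinearMap.congr_fun (hcomp m f) (π x))
      exact this
    show (extMap m (Aug n).subtype (π ((extRep n (m+1) f) x))).val
      = (extMap m (Aug n).subtype ((extAugRep n m f) (π x))).val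
    rw [hkey, hrhs, hkey]
    show CliffordAlgebra.contractLeft s (ExteriorAlgebra.map (natRep n f) x.val)
      = ExteriorAlgebra.map (natRep n f) (CliffordAlgebra.contractLeft s x.val)
    rw [contract_naturality]
    have hsnat : s.comp (natRep n f : (Fin n → ℂ) →ₗ[ℂ] (Fin n → ℂ)) = s :=
      LinearMap.ext fun y => by
        rw [LinearMap.comp_apply, hs, hs]; exact sum_natRep n f y
    rw [hsnat]
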